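/- arXiv:2204.10499 — 2 statements merged into one kernel-verified Lean document; each statement's English description precedes it below -/
import Mathlib

section
/- Lattice operations are statistically p-continuous: in a lattice-normed Riesz space, if xₙ →(st_p) x and yₙ →(st_p) y, then xₙ ∨ yₙ →(st_p) x ∨ y and xₙ ∧ yₙ →(st_p) x ∧ y. -/
open scoped Classical

/-- `K ⊆ ℕ` has natural density `d`. -/
def HasDensity (K : Set ℕ) (d : ℝ) : Prop :=
  Filter.Tendsto
    (fun n => (((Finset.range n).filter (fun k => k ∈ K)).card : ℝ) / n)
    Filter.atTop (nhds d)

/-- Statistical p-convergence of a sequence `x` to `x₀` in a lattice-normed space `(X, p, E)`: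
there is a sequence `q` in `E`, decreasing along an index set `K` of density 1 with infimum `0`,
dominating `p (x n - x₀)` on `K`. -/
def StatPConv {X E : Type*} [AddCommGroup X] [AddCommGroup E] [Lattice E]
    (p : X → E) (x : ℕ → X) (x₀ : X) : Prop :=
  ∃ (q : ℕ → E) (K : Set ℕ), HasDensity K 1 ∧
    (∀ m ∈ K, ∀ n ∈ K, m ≤ n → q n ≤ q m) ∧
    IsGLB (q '' K) 0 ∧
    ∀ n ∈ K, p (x n - x₀) ≤ q n

/-- A set of density 1 is unbounded. -/
lemma hasDensity_one_unbounded {K : Set ℕ} (h : HasDensity K 1) :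
    ∀ m : ℕ, ∃ n ∈ K, m ≤ n := by
  intro m
  by_contra hc
  push_neg at hc
  have hzero : HasDensity K 0 := by
    have hub : ∀ n : ℕ,
        (((Finset.range n).filter (fun k => k ∈ K)).card : ℝ) ≤ m := by
      intro n
      have hsub : (Finset.range n).filter (fun k => k ∈ K) ⊆ Finset.range m := by
        intro k hk
        simp only [Finset.mem_filter, Finset.mem_range] at hk ⊢
        exact hc k hk.2
      have := Finset.card_le_card hsub
      simpa using (Nat.cast_le (α := ℝ)).2 this
    have h1 : Filter.Tendsto (fun n : ℕ => (m : ℝ) / n) Filter.atTop (nhds 0) :=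
      tendsto_const_div_atTop_nhds_zero_nat (m : ℝ)
    refine tendsto_of_tendsto_of_tendsto_of_le_of_le' tendsto_const_nhds h1 ?_ ?_
    · filter_upwards [Filter.eventually_ge_atTop 1] with n hn
      positivity
    · filter_upwards [Filter.eventually_ge_atTop 1] with n hn
      have hn' : (0 : ℝ) < n := by exact_mod_cast hn
      exact div_le_div_of_nonneg_right (hub n) hn'.le
  have := tendsto_nhds_unique h hzero
  norm_num at this

/-- Intersection of two density-1 sets has density 1. -/
lemma hasDensity_one_inter {K L : Set ℕ} (hK : HasDensity K 1) (hL : HasDensity L 1) :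
    HasDensity (K ∩ L) 1 := by
  set fK := fun n : ℕ => (((Finset.range n).filter (fun k => k ∈ K)).card : ℝ) / n
  set fL := fun n : ℕ => (((Finset.range n).filter (fun k => k ∈ L)).card : ℝ) / n
  have hlow : Filter.Tendsto (fun n => fK n + fL n - 1) Filter.atTop (nhds 1) := by
    have := (hK.add hL).sub (tendsto_const_nhds (x := (1 : ℝ)))
    norm_num at this
    exact this
  refine tendsto_of_tendsto_of_tendsto_of_le_of_le' hlow tendsto_const_nhds ?_ ?_
  · filter_upwards [Filter.eventually_ge_atTop 1] with n hn
    have hn' : (0 : ℝ) < n := by exact_mod_cast hn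
    set A := (Finset.range n).filter (fun k => k ∈ K) with hA
    set B := (Finset.range n).filter (fun k => k ∈ L) with hB
    have hcard : A.card + B.card ≤
        ((Finset.range n).filter (fun k => k ∈ K ∩ L)).card + n := by
      have hsub : A ∩ B ⊆ (Finset.range n).filter (fun k => k ∈ K ∩ L) := by
        intro k hk
        simp only [hA, hB, Finset.mem_inter, Finset.mem_filter, Finset.mem_range,
          Set.mem_inter_iff] at hk ⊢
        exact ⟨hk.1.1, hk.1.2, hk.2.2⟩
      have h1 : (A ∪ B).card + (A ∩ B).card = A.card + B.card :=
        Finset.card_union_add_card_inter A B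
      have h2 : (A ∪ B).card ≤ n := by
        have : A ∪ B ⊆ Finset.range n := by
          apply Finset.union_subset <;> exact Finset.filter_subset _ _
        simpa using Finset.card_le_card this
      have h3 := Finset.card_le_card hsub
      omega
    have hcR := (Nat.cast_le (α := ℝ)).2 hcard
    push_cast at hcR
    have key : fK n + fL n - 1 ≤
        ((((Finset.range n).filter (fun k => k ∈ K ∩ L)).card : ℝ)) / n := by
      have heq : fK n + fL n - 1 = ((A.card : ℝ) + B.card - n) / n := by
        show (A.card : ℝ) / n + (B.card : ℝ) / n - 1 = _
        field_simp [fK, fL, A, B]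
      rw [heq]
      apply div_le_div_of_nonneg_right _ hn'.le
      linarith
    convert key using 4
    rfl
    exact Finset.filter_congr_decidable _ _ _
  · filter_upwards [Filter.eventually_ge_atTop 1] with n hn
    have hn' : (0 : ℝ) < n := by exact_mod_cast hn
    have hc : (((Finset.range n).filter (fun k => k ∈ K ∩ L)).card : ℝ) ≤ n := by
      exact_mod_cast Finset.card_le_card (Finset.filter_subset _ _) |>.trans (by simp)
    have key : (((Finset.range n).filter (fun k => k ∈ K ∩ L)).card : ℝ) / n ≤ 1 :=
      calc (((Finset.range n).filter (fun k => k ∈ K ∩ L)).card : ℝ) / n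
          ≤ (n : ℝ) / n := div_le_div_of_nonneg_right hc hn'.le
        _ = 1 := div_self hn'.ne'
    convert key using 4
    rfl
    exact Finset.filter_congr_decidable _ _ _

set_option maxHeartbeats 1000000 in
/-- Lattice operations are statistically p-continuous in a lattice-normed Riesz space. -/
theorem statPConv_sup_inf {X E : Type*} [AddCommGroup X] [Lattice X] [CovariantClass X X (· + ·) (· ≤ ·)] [Module ℝ X]
    [AddCommGroup E] [Lattice E] [CovariantClass E E (· + ·) (· ≤ ·)] [Module ℝ E]
    (p : X → E)
    (hp0 : ∀ v : X, 0 ≤ p v)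
    (hpeq : ∀ v : X, p v = 0 ↔ v = 0)
    (hpsmul : ∀ (c : ℝ) (v : X), p (c • v) = |c| • p v)
    (hptri : ∀ v w : X, p (v + w) ≤ p v + p w)
    (hpmono : ∀ v w : X, |v| ≤ |w| → p v ≤ p w)
    (x y : ℕ → X) (a b : X)
    (hx : StatPConv p x a) (hy : StatPConv p y b) :
    StatPConv p (fun n => x n ⊔ y n) (a ⊔ b) ∧
      StatPConv p (fun n => x n ⊓ y n) (a ⊓ b) := by
  obtain ⟨qx, Kx, hdx, hmx, hgx, hbx⟩ := hx
  obtain ⟨qy, Ky, hdy, hmy, hgy, hby⟩ := hy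
  have pabs : ∀ w : X, p |w| = p w := fun w =>
    le_antisymm (hpmono _ _ (by rw [abs_abs])) (hpmono _ _ (by rw [abs_abs]))
  -- the common index set
  set K : Set ℕ := Kx ∩ Ky with hKdef
  have hdK : HasDensity K 1 := hasDensity_one_inter hdx hdy
  have hKub : ∀ m : ℕ, ∃ n ∈ K, m ≤ n := hasDensity_one_unbounded hdK
  have hqx0 : ∀ n ∈ Kx, (0 : E) ≤ qx n := fun n hn => hgx.1 ⟨n, hn, rfl⟩
  have hqy0 : ∀ n ∈ Ky, (0 : E) ≤ qy n := fun n hn => hgy.1 ⟨n, hn, rfl⟩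
  -- key combination lemma
  have key : ∀ (z : ℕ → X) (z₀ : X),
      (∀ n, |z n - z₀| ≤ |x n - a| + |y n - b|) → StatPConv p z z₀ := by
    intro z z₀ hz
    refine ⟨fun n => qx n + qy n, K, hdK, ?_, ?_, ?_⟩
    · intro m hm n hn hmn
      exact add_le_add (hmx m hm.1 n hn.1 hmn) (hmy m hm.2 n hn.2 hmn)
    · constructor
      · rintro _ ⟨n, hn, rfl⟩
        exact add_nonneg (hqx0 n hn.1) (hqy0 n hn.2)
      · intro c hc
        -- first show c ≤ qy m for all m ∈ K
        have hcy : ∀ m ∈ K, c ≤ qy m := by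
          intro m hm
          have hlb : c - qy m ∈ lowerBounds (qx '' Kx) := by
            rintro _ ⟨j, hj, rfl⟩
            obtain ⟨n, hn, hn'⟩ := hKub (max m j)
            have hmn : m ≤ n := le_trans (le_max_left _ _) hn'
            have hjn : j ≤ n := le_trans (le_max_right _ _) hn'
            have h1 : c ≤ qx n + qy n := hc ⟨n, hn, rfl⟩
            have h2 : qy n ≤ qy m := hmy m hm.2 n hn.2 hmn
            have h3 : qx n ≤ qx j := hmx j hj n hn.1 hjn
            have : c ≤ qx n + qy m := h1.trans (add_le_add_right h2 _)
            calc c - qy m ≤ qx n := sub_le_iff_le_add.2 this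
              _ ≤ qx j := h3
          have : c - qy m ≤ 0 := hgx.2 hlb
          exact sub_nonpos.1 this
        -- then c is a lower bound for qy '' Ky
        have hlb' : c ∈ lowerBounds (qy '' Ky) := by
          rintro _ ⟨j, hj, rfl⟩
          obtain ⟨n, hn, hjn⟩ := hKub j
          exact (hcy n hn).trans (hmy j hj n hn.2 hjn)
        exact hgy.2 hlb'
    · intro n hn
      have h1 : p (z n - z₀) ≤ p (|x n - a| + |y n - b|) := by
        apply hpmono
        have hnn : (0 : X) ≤ |x n - a| + |y n - b| := add_nonneg (abs_nonneg _) (abs_nonneg _)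
        rw [abs_of_nonneg hnn]
        exact hz n
      have h2 : p (|x n - a| + |y n - b|) ≤ p (x n - a) + p (y n - b) := by
        calc p (|x n - a| + |y n - b|) ≤ p |x n - a| + p |y n - b| := hptri _ _
          _ = p (x n - a) + p (y n - b) := by rw [pabs, pabs]
      exact (h1.trans h2).trans (add_le_add (hbx n hn.1) (hby n hn.2))
  constructor
  · refine key _ _ fun n => ?_
    have h1 : |x n ⊔ y n - (a ⊔ y n)| ≤ |x n - a| := abs_sup_sub_sup_le_abs _ _ _
    have h2 : |a ⊔ y n - (a ⊔ b)| ≤ |y n - b| := by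
      rw [sup_comm a (y n), sup_comm a b]
      exact abs_sup_sub_sup_le_abs _ _ _
    calc |x n ⊔ y n - (a ⊔ b)|
        = |(x n ⊔ y n - (a ⊔ y n)) + (a ⊔ y n - (a ⊔ b))| := by
          rw [sub_add_sub_cancel]
      _ ≤ |x n ⊔ y n - (a ⊔ y n)| + |a ⊔ y n - (a ⊔ b)| := abs_add_le _ _
      _ ≤ |x n - a| + |y n - b| := add_le_add h1 h2
  · refine key _ _ fun n => ?_
    have h1 : |x n ⊓ y n - (a ⊓ y n)| ≤ |x n - a| := abs_inf_sub_inf_le_abs _ _ _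
    have h2 : |a ⊓ y n - (a ⊓ b)| ≤ |y n - b| := by
      rw [inf_comm a (y n), inf_comm a b]
      exact abs_inf_sub_inf_le_abs _ _ _
    calc |x n ⊓ y n - (a ⊓ b)|
        = |(x n ⊓ y n - (a ⊓ y n)) + (a ⊓ y n - (a ⊓ b))| := by
          rw [sub_add_sub_cancel]
      _ ≤ |x n ⊓ y n - (a ⊓ y n)| + |a ⊓ y n - (a ⊓ b)| := abs_add_le _ _
      _ ≤ |x n - a| + |y n - b| := add_le_add h1 h2
end

section
/- If a Banach lattice X (viewed as the lattice-normed space (X, ‖·‖, ℝ)) is a statistical p-KB-space, then X is a KB-space: every increasing norm-bounded sequence of positive elements is norm convergent. -/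
open scoped Classical

lemma hasDensity_univ : HasDensity Set.univ 1 := by
  apply Filter.Tendsto.congr' (f₁ := fun n : ℕ => (n : ℝ) / n)
  · filter_upwards with n
    simp
  · apply Filter.Tendsto.congr' (f₁ := fun _ : ℕ => (1 : ℝ))
    · filter_upwards [Filter.eventually_ge_atTop 1] with n hn
      field_simp
    · exact tendsto_const_nhds

lemma infinite_of_hasDensity_one {K : Set ℕ} (h : HasDensity K 1) : K.Infinite := by
  by_contra hfin
  rw [Set.not_infinite] at hfin
  have hle : ∀ n : ℕ, (((Finset.range n).filter (fun k => k ∈ K)).card : ℝ) / n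
      ≤ (hfin.toFinset.card : ℝ) / n := by
    intro n
    rcases Nat.eq_zero_or_pos n with rfl | hn
    · simp
    · gcongr
      intro k hk
      simp only [Finset.mem_filter] at hk
      exact hfin.mem_toFinset.mpr hk.2
  have h0 : Filter.Tendsto
      (fun n => (((Finset.range n).filter (fun k => k ∈ K)).card : ℝ) / n)
      Filter.atTop (nhds 0) := by
    apply tendsto_of_tendsto_of_tendsto_of_le_of_le tendsto_const_nhds
      (tendsto_const_div_atTop_nhds_zero_nat (hfin.toFinset.card : ℝ))
    · intro n; positivity
    · exact hle
  exact one_ne_zero (tendsto_nhds_unique h h0)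

/-- A Banach lattice, viewed as the lattice-normed space `(X, ‖·‖, ℝ)`, that is a
statistical p-KB-space is a KB-space: every increasing norm-bounded sequence of
positive elements is norm convergent. -/
theorem kb_of_stat_p_kb {X : Type*} [NormedAddCommGroup X] [Lattice X] [HasSolidNorm X]
    [IsOrderedAddMonoid X] [NormedSpace ℝ X]
    [CompleteSpace X]
    (hstatKB : ∀ x : ℕ → X, (∀ n, 0 ≤ x n) → Monotone x →
      (∃ (e : ℝ) (K : Set ℕ), 0 ≤ e ∧ HasDensity K 1 ∧ ∀ n ∈ K, ‖x n‖ ≤ e) →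
      ∃ a : X, StatPConv (fun v : X => (‖v‖ : ℝ)) x a) :
    ∀ x : ℕ → X, (∀ n, 0 ≤ x n) → Monotone x → (∃ M : ℝ, ∀ n, ‖x n‖ ≤ M) →
      ∃ a : X, Filter.Tendsto x Filter.atTop (nhds a) := by
  intro x hpos hmono ⟨M, hM⟩
  obtain ⟨a, q, K, hK1, hqmono, hglb, hqb⟩ := hstatKB x hpos hmono
    ⟨max M 0, Set.univ, le_max_right _ _, hasDensity_univ,
      fun n _ => (hM n).trans (le_max_left _ _)⟩
  have hKinf : K.Infinite := infinite_of_hasDensity_one hK1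
  have hKub : ∀ N : ℕ, ∃ n ∈ K, N ≤ n := by
    intro N
    obtain ⟨n, hn, hlt⟩ := hKinf.exists_gt N
    exact ⟨n, hn, hlt.le⟩
  -- For every ε > 0 there is k₀ ∈ K with q k₀ < ε
  have hsmall : ∀ ε : ℝ, 0 < ε → ∃ k₀ ∈ K, q k₀ < ε := by
    intro ε hε
    by_contra hcon
    push_neg at hcon
    have : ε ≤ 0 := hglb.2 (fun y hy => by
      obtain ⟨k, hk, rfl⟩ := hy
      exact hcon k hk)
    linarith
  -- the filter along K
  have hfilter : Filter.NeBot (Filter.atTop ⊓ Filter.principal K) := by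
    rw [Filter.inf_principal_neBot_iff]
    intro U hU
    obtain ⟨N, hN⟩ := Filter.mem_atTop_sets.mp hU
    obtain ⟨n, hnK, hn⟩ := hKub N
    exact ⟨n, hN n hn, hnK⟩
  have htendK : Filter.Tendsto x (Filter.atTop ⊓ Filter.principal K) (nhds a) := by
    rw [Metric.tendsto_nhds]
    intro ε hε
    obtain ⟨k₀, hk₀K, hk₀⟩ := hsmall ε hε
    have : {n | dist (x n) a < ε} ∈ Filter.atTop ⊓ Filter.principal K := by
      apply Filter.mem_inf_of_inter (Filter.mem_atTop k₀) (Filter.mem_principal_self K)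
      rintro n ⟨hn1, hn2⟩
      have h1 : ‖x n - a‖ ≤ q n := hqb n hn2
      have h2 : q n ≤ q k₀ := hqmono k₀ hk₀K n hn2 hn1
      calc dist (x n) a = ‖x n - a‖ := dist_eq_norm _ _
        _ ≤ q k₀ := h1.trans h2
        _ < ε := hk₀
    exact this
  have hub : ∀ m, x m ≤ a := by
    intro m
    apply ge_of_tendsto htendK
    have : {n | x m ≤ x n} ∈ Filter.atTop ⊓ Filter.principal K :=
      Filter.mem_inf_of_left (Filter.mem_atTop_sets.mpr ⟨m, fun n hn => hmono hn⟩)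
    filter_upwards [this] with n hn using hn
  refine ⟨a, ?_⟩
  rw [Metric.tendsto_atTop]
  intro ε hε
  obtain ⟨k₀, hk₀K, hk₀⟩ := hsmall ε hε
  refine ⟨k₀, fun n hn => ?_⟩
  have h1 : |x n - a| ≤ |x k₀ - a| := by
    rw [abs_of_nonpos (sub_nonpos.mpr (hub n)), abs_of_nonpos (sub_nonpos.mpr (hub k₀))]
    simp only [neg_sub]
    exact sub_le_sub_left (hmono hn) a
  calc dist (x n) a = ‖x n - a‖ := dist_eq_norm _ _
    _ ≤ ‖x k₀ - a‖ := norm_le_norm_of_abs_le_abs h1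
    _ ≤ q k₀ := hqb k₀ hk₀K
    _ < ε := hk₀
end
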